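/- Let n ≥ 2 and let m_1 < m_2 < ... < m_n be an arithmetic sequence of positive integers with common difference d and gcd(m_1, d) = 1. Write m_1 = q(n-1) + r with q ∈ ℕ, r ∈ {1,...,n-1}, and set α := q + d. Then α + 1 = min { b ∈ ℤ⁺ : b·m_1 ∈ ℕm_2 + ℕm_3 + ... + ℕm_n }, i.e., α + 1 is the least positive integer b such that b·m_1 lies in the numerical semigroup generated by m_2, ..., m_n. -/

import Mathlib

/-- α + 1 is the least positive b with b·m₁ in the semigroup generated by m₂,…,mₙ. -/
theorem stmt_1 (n d m1 q r : ℕ) (m : ℕ → ℕ)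
    (hn : 2 ≤ n) (hd : 1 ≤ d) (hm1 : 1 ≤ m1)
    (hgcd : Nat.gcd m1 d = 1)
    (hm : ∀ i, 1 ≤ i → i ≤ n → m i = m1 + (i - 1) * d)
    (hdiv : m1 = q * (n - 1) + r) (hr1 : 1 ≤ r) (hr2 : r ≤ n - 1) :
    IsLeast {b : ℕ | 0 < b ∧
        ∃ δ : ℕ → ℕ, b * m1 = ∑ i ∈ Finset.Icc 2 n, δ i * m i}
      (q + d + 1) := by
  constructor
  · refine ⟨by omega, fun i => (if i = n then q else 0) + (if i = r + 1 then 1 else 0), ?_⟩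
    have h1 : ∀ i ∈ Finset.Icc 2 n,
        ((if i = n then q else 0) + (if i = r + 1 then 1 else 0)) * m i
        = (if i = n then q * m i else 0) + (if i = r + 1 then 1 * m i else 0) := by
      intro i _
      split <;> split <;> simp <;> ring
    rw [Finset.sum_congr rfl h1, Finset.sum_add_distrib,
      Finset.sum_ite_eq' (Finset.Icc 2 n) n (fun i => q * m i),
      Finset.sum_ite_eq' (Finset.Icc 2 n) (r + 1) (fun i => 1 * m i)]
    have hnmem : n ∈ Finset.Icc 2 n := by simp [Finset.mem_Icc]; omega
    have hrmem : r + 1 ∈ Finset.Icc 2 n := by simp [Finset.mem_Icc]; omega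
    rw [if_pos hnmem, if_pos hrmem, hm n (by omega) le_rfl, hm (r + 1) (by omega) (by omega)]
    have hr' : r + 1 - 1 = r := by omega
    rw [hr', hdiv]
    ring
  · rintro b ⟨hb, δ, heq⟩
    set k := ∑ i ∈ Finset.Icc 2 n, δ i with hk
    set t := ∑ i ∈ Finset.Icc 2 n, δ i * (i - 1) with ht
    have key : ∑ i ∈ Finset.Icc 2 n, δ i * m i = k * m1 + t * d := by
      have h2 : ∀ i ∈ Finset.Icc 2 n, δ i * m i = δ i * m1 + δ i * (i - 1) * d := by
        intro i hi
        rw [Finset.mem_Icc] at hi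
        rw [hm i (by omega) hi.2]
        ring
      rw [Finset.sum_congr rfl h2, Finset.sum_add_distrib, ← Finset.sum_mul, ← Finset.sum_mul]
    rw [key] at heq
    have hkt : k ≤ t := by
      apply Finset.sum_le_sum
      intro i hi
      rw [Finset.mem_Icc] at hi
      have : 1 ≤ i - 1 := by omega
      calc δ i = δ i * 1 := by ring
        _ ≤ δ i * (i - 1) := Nat.mul_le_mul_left _ this
    have htk : t ≤ k * (n - 1) := by
      rw [Finset.sum_mul]
      apply Finset.sum_le_sum
      intro i hi
      rw [Finset.mem_Icc] at hi
      exact Nat.mul_le_mul_left _ (by omega)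
    have hkb : k ≤ b := by
      have h3 : k * m1 ≤ b * m1 := by omega
      exact Nat.le_of_mul_le_mul_right h3 hm1
    obtain ⟨B, hB⟩ : ∃ B, b = k + B := ⟨b - k, by omega⟩
    have hBm : B * m1 = t * d := by
      rw [hB, add_mul] at heq
      omega
    have hdB : d ∣ B := by
      have hdvd : d ∣ B * m1 := ⟨t, by rw [hBm]; ring⟩
      exact (Nat.Coprime.symm hgcd).dvd_of_dvd_mul_right hdvd
    obtain ⟨s, hs⟩ := hdB
    have hts : t = s * m1 := by
      have h4 : d * (s * m1) = d * t := by
        rw [show d * (s * m1) = (d * s) * m1 by ring, ← hs, hBm]; ring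
      exact (Nat.eq_of_mul_eq_mul_left (by omega) h4).symm
    have hs1 : 1 ≤ s := by
      by_contra h
      have : s = 0 := by omega
      subst this
      simp at hts
      have hk0 : k = 0 := by omega
      have : b = 0 := by omega
      omega
    have hkq : s * q + 1 ≤ k := by
      have h5 : s * m1 ≤ k * (n - 1) := hts ▸ htk
      rw [hdiv] at h5
      have hsr : 1 ≤ s * r := Nat.mul_le_mul hs1 hr1
      nlinarith [h5, hsr]
    have hq : q ≤ s * q := Nat.le_mul_of_pos_left q hs1
    have hd' : d ≤ d * s := Nat.le_mul_of_pos_right d hs1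
    omega
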